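/- For 0 ≤ k ≤ p^d − 2 and r = k/(p^d − 1) ∈ [0,1), the p-digit sum satisfies σ_p(k) = (p−1)/(p^d−1) · Σ_{j=0}^{d−1} {p^j r}(p^d − 1), i.e., σ_p(k) = (p−1) · Σ_{j=0}^{d−1} {p^j k/(p^d−1)}. -/

import Mathlib

private lemma modval_aux (p d j k : ℕ) (hp2 : 2 ≤ p) (hj : j < d) (hk : k ≤ p ^ d - 2) :
    (p ^ j * k) % (p ^ d - 1) = k / p ^ (d - j) + p ^ j * (k % p ^ (d - j)) := by
  have hpd : 2 ≤ p ^ d := by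
    calc 2 ≤ p := hp2
    _ = p ^ 1 := (pow_one p).symm
    _ ≤ p ^ d := Nat.pow_le_pow_right (by omega) (by omega)
  set N := p ^ d - 1 with hN
  set P := p ^ j with hP
  set Q := p ^ (d - j) with hQ
  have hPQ : P * Q = p ^ d := by rw [hP, hQ, ← pow_add]; congr 1; omega
  have hQpos : 0 < Q := Nat.pow_pos (by omega)
  have hPpos : 0 < P := Nat.pow_pos (by omega)
  set h := k / Q with hh
  set l := k % Q with hl
  have e1 : Q * h + l = k := Nat.div_add_mod k Q
  have e2 : l < Q := Nat.mod_lt _ hQpos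
  have e3 : h < P := by
    rw [hh, Nat.div_lt_iff_lt_mul hQpos]
    calc k < p ^ d := by omega
    _ = P * Q := hPQ.symm
  have hlt : h + P * l < N := by
    by_contra hcon
    push_neg at hcon
    have b1 : P * l ≤ P * (Q - 1) := Nat.mul_le_mul_left _ (by omega)
    have b2 : P * (Q - 1) + P = P * Q := by rw [← Nat.mul_succ]; congr 1; omega
    have hh' : h = P - 1 := by omega
    have hPl : P * l = P * (Q - 1) := by omega
    have hl' : l = Q - 1 := Nat.eq_of_mul_eq_mul_left (by omega) hPl
    have b3 : Q * (P - 1) + Q = Q * P := by rw [← Nat.mul_succ]; congr 1; omega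
    have b4 : Q * h = Q * (P - 1) := by rw [hh']
    have b5 : Q * P = P * Q := Nat.mul_comm _ _
    omega
  have he : P * k = N * h + (h + P * l) := by
    have hd1 : p ^ d = N + 1 := by omega
    calc P * k = P * (Q * h + l) := by rw [e1]
    _ = (P * Q) * h + P * l := by ring
    _ = (N + 1) * h + P * l := by rw [hPQ, hd1]
    _ = N * h + (h + P * l) := by ring
  rw [he, Nat.mul_add_mod, Nat.mod_eq_of_lt hlt]

private lemma legendre_aux (p d k : ℕ) (hp2 : 2 ≤ p) (hd : 1 ≤ d) (hkd : k < p ^ d) :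
    ((Nat.digits p k).sum : ℚ) =
      (k : ℚ) - ((p : ℚ) - 1) * ∑ i ∈ Finset.range d, ((k / p ^ (i + 1) : ℕ) : ℚ) := by
  have hlog : Nat.log p k < d := by
    rcases Nat.eq_zero_or_pos k with rfl | hk0
    · simp only [Nat.log_zero_right]; omega
    · exact Nat.log_lt_of_lt_pow (by omega) hkd
  have hnat : (p - 1) * ∑ i ∈ Finset.range (Nat.log p k).succ, k / p ^ (i + 1)
      = k - (Nat.digits p k).sum := by
    simpa using Nat.sub_one_mul_sum_log_div_pow_eq_sub_sum_digits (p := p) k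
  have hsum : ∑ i ∈ Finset.range d, k / p ^ (i + 1)
      = ∑ i ∈ Finset.range (Nat.log p k).succ, k / p ^ (i + 1) := by
    rw [← Finset.sum_range_add_sum_Ico _ (Nat.succ_le_of_lt hlog)]
    have : ∑ i ∈ Finset.Ico (Nat.log p k).succ d, k / p ^ (i + 1) = 0 := by
      apply Finset.sum_eq_zero
      intro i hi
      simp only [Finset.mem_Ico] at hi
      apply Nat.div_eq_of_lt
      calc k < p ^ (Nat.log p k + 1) := Nat.lt_pow_succ_log_self (by omega) _
      _ ≤ p ^ (i + 1) := Nat.pow_le_pow_right (by omega) (by omega)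
    omega
  have hle : (Nat.digits p k).sum ≤ k := by
    conv_rhs => rw [← Nat.ofDigits_digits p k]
    exact Nat.sum_le_ofDigits _ (by omega)
  have hle2 : (p - 1) * ∑ i ∈ Finset.range (Nat.log p k).succ, k / p ^ (i + 1) ≤ k := by omega
  have := congrArg (Nat.cast : ℕ → ℚ) hnat
  rw [Nat.cast_sub hle, Nat.cast_mul, Nat.cast_sub (by omega : 1 ≤ p)] at this
  have hsumq := congrArg (Nat.cast : ℕ → ℚ) hsum
  push_cast at this hsumq ⊢
  rw [hsumq]
  linarith

/-- For `0 ≤ k ≤ p^d − 2`, the `p`-digit sum satisfies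
`σ_p(k) = (p−1) · ∑_{j=0}^{d−1} {pʲ k/(p^d−1)}`, where `{x}` is the fractional part. -/
theorem digit_sum_eq_sum_fract (p : ℕ) (hp : p.Prime) (d : ℕ) (hd : 1 ≤ d)
    (k : ℕ) (hk : k ≤ p ^ d - 2) :
    ((Nat.digits p k).sum : ℚ) =
      ((p : ℚ) - 1) * ∑ j ∈ Finset.range d, Int.fract ((p : ℚ) ^ j * k / ((p : ℚ) ^ d - 1)) := by
  have hp2 : 2 ≤ p := hp.two_le
  have hpd : 2 ≤ p ^ d := by
    calc 2 ≤ p := hp2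
    _ = p ^ 1 := (pow_one p).symm
    _ ≤ p ^ d := Nat.pow_le_pow_right (by omega) (by omega)
  have hNc : ((p ^ d - 1 : ℕ) : ℚ) = (p : ℚ) ^ d - 1 := by
    rw [Nat.cast_sub (by omega : 1 ≤ p ^ d), Nat.cast_pow, Nat.cast_one]
  have hNne : ((p : ℚ) ^ d - 1) ≠ 0 := by
    rw [← hNc]
    exact_mod_cast (by omega : (p ^ d - 1 : ℕ) ≠ 0)
  have key : ∀ j ∈ Finset.range d, Int.fract ((p : ℚ) ^ j * k / ((p : ℚ) ^ d - 1))
      = ((1 - (p : ℚ) ^ d) * ((k / p ^ (d - j) : ℕ) : ℚ) + (p : ℚ) ^ j * k)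
          / ((p : ℚ) ^ d - 1) := by
    intro j hj
    have hj' := Finset.mem_range.mp hj
    have h1 : (p : ℚ) ^ j * k / ((p : ℚ) ^ d - 1)
        = ((p ^ j * k : ℕ) : ℚ) / ((p ^ d - 1 : ℕ) : ℚ) := by
      rw [hNc]; push_cast; ring
    rw [h1, Int.fract_div_natCast_eq_div_natCast_mod, modval_aux p d j k hp2 hj' hk, hNc]
    congr 1
    -- numerator identity
    have hmod : p ^ (d - j) * (k / p ^ (d - j)) + k % p ^ (d - j) = k :=
      Nat.div_add_mod k (p ^ (d - j))
    have hmodq : ((k % p ^ (d - j) : ℕ) : ℚ)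
        = (k : ℚ) - (p : ℚ) ^ (d - j) * ((k / p ^ (d - j) : ℕ) : ℚ) := by
      have := congrArg (Nat.cast : ℕ → ℚ) hmod
      push_cast at this
      linarith
    have hpow : (p : ℚ) ^ j * (p : ℚ) ^ (d - j) = (p : ℚ) ^ d := by
      rw [← pow_add]; congr 1; omega
    push_cast [hmodq]
    linear_combination (-((k / p ^ (d - j) : ℕ) : ℚ)) * hpow
  rw [Finset.sum_congr rfl key, ← Finset.sum_div]
  have hsplit : ∑ j ∈ Finset.range d,
        ((1 - (p : ℚ) ^ d) * ((k / p ^ (d - j) : ℕ) : ℚ) + (p : ℚ) ^ j * k)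
      = (1 - (p : ℚ) ^ d) * (∑ j ∈ Finset.range d, ((k / p ^ (d - j) : ℕ) : ℚ))
        + (∑ j ∈ Finset.range d, (p : ℚ) ^ j) * k := by
    rw [Finset.sum_add_distrib, ← Finset.mul_sum, Finset.sum_mul]
  have hreflect : ∑ j ∈ Finset.range d, ((k / p ^ (d - j) : ℕ) : ℚ)
      = ∑ i ∈ Finset.range d, ((k / p ^ (i + 1) : ℕ) : ℚ) := by
    rw [← Finset.sum_range_reflect]
    apply Finset.sum_congr rfl
    intro j hj
    have hj' := Finset.mem_range.mp hj
    have h : d - (d - 1 - j) = j + 1 := by omega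
    rw [h]
  rw [hsplit, hreflect, legendre_aux p d k hp2 hd (by omega)]
  have hG : (∑ j ∈ Finset.range d, (p : ℚ) ^ j) * ((p : ℚ) - 1) = (p : ℚ) ^ d - 1 :=
    geom_sum_mul _ _
  field_simp
  linear_combination (-(k : ℚ)) * hG
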